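/- Let G be a finite purely non-abelian group, and suppose Z(G) ∩ G' is a direct factor of Z(G); that is, there is a subgroup C of Z(G) with (Z(G) ∩ G') ∩ C = 1 and Z(G) = (Z(G) ∩ G')·C. Then Aut_{c'}(G) has a complement in Aut_c(G): there is a subgroup K of Aut(G) with K ⊆ Aut_c(G), K ∩ Aut_{c'}(G) = 1, and Aut_c(G) = Aut_{c'}(G)·K. -/

import Mathlib

-- finite monoid: some positive power is idempotent
lemma exists_pow_idem {M : Type*} [Monoid M] [Finite M] (a : M) :
    ∃ n : ℕ, 1 ≤ n ∧ a ^ n * a ^ n = a ^ n := by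
  obtain ⟨i, j, hne, hij⟩ := Finite.exists_ne_map_eq_of_infinite (fun n : ℕ => a ^ n)
  wlog hlt : i < j generalizing i j
  · exact this j i hne.symm hij.symm (by omega)
  set p := j - i with hp
  have hppos : 0 < p := by omega
  have step : ∀ m, i ≤ m → a ^ m = a ^ (m + p) := by
    intro m hm
    have : a ^ m = a ^ (m - i) * a ^ i := by rw [← pow_add]; congr 1; omega
    rw [this, hij, ← pow_add]
    congr 1; omega
  have key : ∀ k m, i ≤ m → a ^ m = a ^ (m + k * p) := by
    intro k
    induction k with
    | zero => simp
    | succ k ih =>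
      intro m hm
      rw [ih m hm, step (m + k * p) (by omega)]
      congr 1; ring
  refine ⟨p * (i + 1), by nlinarith, ?_⟩
  rw [← pow_add]
  have := key (i + 1) (p * (i + 1)) (by nlinarith)
  rw [← this.symm]
  congr 1; ring

def shiftHom {G : Type*} [Group G] (c : G →* G) (hc : ∀ g, c g ∈ Subgroup.center G) :
    Monoid.End G :=
  { toFun := fun g => c g * g
    map_one' := by simp
    map_mul' := by
      intro x y
      simp only [map_mul]
      rw [mul_assoc (c x), ← mul_assoc (c y) x y,
        ← Subgroup.mem_center_iff.mp (hc y) x]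
      group }

open Subgroup in
lemma bij_of_central_shift {G : Type*} [Group G] [Finite G]
    (hpna : ∀ A B : Subgroup G, A.Normal → B.Normal →
      (∀ a ∈ A, ∀ b ∈ A, a * b = b * a) → A ⊓ B = ⊥ →
      (∀ g : G, ∃ a ∈ A, ∃ b ∈ B, g = a * b) → A = ⊥)
    (c : G →* G) (hc : ∀ g, c g ∈ Subgroup.center G) :
    Function.Bijective (shiftHom c hc) := by
  have hcomm : ∀ z : G, z ∈ Subgroup.center G → ∀ g : G, g * z = z * g :=
    fun z hz g => Subgroup.mem_center_iff.mp hz g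
  set σ : Monoid.End G := shiftHom c hc with hσ
  -- each power shifts by a central element
  have shift : ∀ (n : ℕ) (g : G), ((σ ^ n : Monoid.End G) g) * g⁻¹ ∈ Subgroup.center G := by
    intro n
    induction n with
    | zero => intro g; simp [Subgroup.one_mem]
    | succ m ih =>
      intro g
      have hpow : (σ ^ (m + 1) : Monoid.End G) g = σ ((σ ^ m : Monoid.End G) g) := by
        rw [pow_succ']; rfl
      rw [hpow]
      have : σ ((σ ^ m : Monoid.End G) g) * g⁻¹
          = c ((σ ^ m : Monoid.End G) g) * ((σ ^ m : Monoid.End G) g * g⁻¹) := by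
        show c _ * _ * g⁻¹ = _
        group
      rw [this]
      exact Subgroup.mul_mem _ (hc _) (ih g)
  have : Finite (Monoid.End G) :=
    Finite.of_injective (fun f : Monoid.End G => (f : G → G)) DFunLike.coe_injective
  obtain ⟨n, hn1, hidem⟩ := exists_pow_idem σ
  set τ : G →* G := (σ ^ n : Monoid.End G) with hτ
  have hττ : ∀ g, τ (τ g) = τ g := by
    intro g
    have := DFunLike.congr_fun hidem g
    exact this
  have hAle : (τ.ker : Subgroup G) ≤ Subgroup.center G := by
    intro g hg
    have h1 : τ g = 1 := hg
    have := shift n g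
    rw [← hτ] at this  -- τ g * g⁻¹ ∈ center
    replace this : τ g * g⁻¹ ∈ Subgroup.center G := this
    rw [h1, one_mul] at this
    simpa using Subgroup.inv_mem _ this
  have hAnormal : τ.ker.Normal := by
    constructor
    intro a ha g
    have hac : a ∈ Subgroup.center G := hAle ha
    have : g * a * g⁻¹ = a := by rw [hcomm a hac g]; group
    rw [this]; exact ha
  have hBnormal : τ.range.Normal := by
    constructor
    intro b hb g
    obtain ⟨x, rfl⟩ := hb
    refine ⟨g * x * g⁻¹, ?_⟩
    have hz := shift n g
    rw [← hτ] at hz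
    set z := τ g * g⁻¹ with hzdef
    have hg' : τ g = z * g := by rw [hzdef]; group
    have hconj : z * (g * τ x * g⁻¹) * z⁻¹ = g * τ x * g⁻¹ := by
      rw [← hcomm z hz (g * τ x * g⁻¹)]; group
    calc τ (g * x * g⁻¹) = τ g * τ x * (τ g)⁻¹ := by rw [map_mul, map_mul, map_inv]
      _ = z * (g * τ x * g⁻¹) * z⁻¹ := by rw [hg', mul_inv_rev]; group
      _ = g * τ x * g⁻¹ := hconj
  have hint : τ.ker ⊓ τ.range = ⊥ := by
    rw [eq_bot_iff]
    rintro x ⟨hk, y, rfl⟩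
    have h1 : τ (τ y) = 1 := hk
    rw [hττ] at h1
    simp [h1]
  have hgen : ∀ g : G, ∃ a ∈ τ.ker, ∃ b ∈ τ.range, g = a * b := by
    intro g
    refine ⟨g * (τ g)⁻¹, ?_, τ g, ⟨g, rfl⟩, by group⟩
    show τ _ = 1
    rw [map_mul, map_inv, hττ]
    group
  have hAbot : τ.ker = ⊥ :=
    hpna τ.ker τ.range hAnormal hBnormal
      (fun a ha b hb => hcomm b (hAle hb) a ▸ (hcomm a (hAle ha) b).symm)
      hint hgen
  have hinj : Function.Injective σ := by
    rw [injective_iff_map_eq_one]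
    intro a ha
    have hτa : τ a = 1 := by
      obtain ⟨m, rfl⟩ : ∃ m, n = m + 1 := ⟨n - 1, by omega⟩
      show (σ ^ (m + 1) : Monoid.End G) a = 1
      rw [pow_succ]
      show (σ ^ m : Monoid.End G) (σ a) = 1
      rw [ha, map_one]
    have : a ∈ τ.ker := hτa
    rw [hAbot] at this
    simpa using this
  exact Finite.injective_iff_bijective.mp hinj

theorem autc'_has_complement {G : Type*} [Group G] [Finite G]
    (hpna : ∀ A B : Subgroup G, A.Normal → B.Normal →
      (∀ a ∈ A, ∀ b ∈ A, a * b = b * a) → A ⊓ B = ⊥ →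
      (∀ g : G, ∃ a ∈ A, ∃ b ∈ B, g = a * b) → A = ⊥)
    (C : Subgroup G) (hC : C ≤ Subgroup.center G)
    (hCint : (Subgroup.center G ⊓ commutator G) ⊓ C = ⊥)
    (hCgen : ∀ z ∈ Subgroup.center G,
      ∃ a ∈ Subgroup.center G ⊓ commutator G, ∃ c ∈ C, z = a * c) :
    ∃ K : Subgroup (MulAut G),
      (∀ φ ∈ K, ∀ g : G, φ g * g⁻¹ ∈ Subgroup.center G) ∧
      (∀ φ ∈ K, (∀ g : G, φ g⁻¹ * g ∈ Subgroup.center G ⊓ commutator G) →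
        φ = (1 : MulAut G)) ∧
      (∀ φ : MulAut G, (∀ g : G, φ g * g⁻¹ ∈ Subgroup.center G) →
        ∃ ψ : MulAut G, (∀ g : G, ψ g⁻¹ * g ∈ Subgroup.center G ⊓ commutator G) ∧
          ∃ k ∈ K, φ = ψ * k) := by
  classical
  have hcomm : ∀ z : G, z ∈ Subgroup.center G → ∀ g : G, g * z = z * g :=
    fun z hz g => Subgroup.mem_center_iff.mp hz g
  -- uniqueness of the decomposition Z = (Z ⊓ G') * C
  have uniq : ∀ a₁ c₁ a₂ c₂ : G, a₁ ∈ Subgroup.center G ⊓ commutator G →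
      a₂ ∈ Subgroup.center G ⊓ commutator G → c₁ ∈ C → c₂ ∈ C →
      a₁ * c₁ = a₂ * c₂ → a₁ = a₂ ∧ c₁ = c₂ := by
    intro a₁ c₁ a₂ c₂ ha₁ ha₂ hc₁ hc₂ hEq
    have key : a₂⁻¹ * a₁ = c₂ * c₁⁻¹ := by
      have h : a₁ = a₂ * c₂ * c₁⁻¹ := by rw [← hEq]; group
      rw [h]; group
    have hmem : a₂⁻¹ * a₁ ∈ (Subgroup.center G ⊓ commutator G) ⊓ C := by
      refine ⟨Subgroup.mul_mem _ (Subgroup.inv_mem _ ha₂) ha₁, ?_⟩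
      rw [key]; exact Subgroup.mul_mem _ hc₂ (Subgroup.inv_mem _ hc₁)
    rw [hCint, Subgroup.mem_bot] at hmem
    have ha : a₁ = a₂ := by
      have := hmem; rwa [inv_mul_eq_one, eq_comm] at this
    refine ⟨ha, ?_⟩
    subst ha
    exact mul_left_cancel hEq
  -- the complement K
  refine ⟨{ carrier := {φ : MulAut G | ∀ g : G, φ g * g⁻¹ ∈ C}
            one_mem' := by intro g; simpa using Subgroup.one_mem C
            mul_mem' := by
              intro φ ψ hφ hψ g
              have h1 := hφ (ψ g)
              have h2 := hψ g
              have : (φ * ψ) g * g⁻¹ = (φ (ψ g) * (ψ g)⁻¹) * (ψ g * g⁻¹) := by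
                show φ (ψ g) * g⁻¹ = _
                group
              rw [this]
              exact Subgroup.mul_mem _ h1 h2
            inv_mem' := by
              intro φ hφ g
              have h1 := hφ (φ⁻¹ g)
              have h2 : φ (φ⁻¹ g) = g := φ.apply_symm_apply g
              rw [h2] at h1
              have := Subgroup.inv_mem _ h1
              rwa [mul_inv_rev, inv_inv] at this }, ?_, ?_, ?_⟩
  · intro φ hφ g
    exact hC (hφ g)
  · intro φ hφ hφ'
    apply MulEquiv.ext
    intro g
    show φ g = g
    have hx : φ g * g⁻¹ ∈ C := hφ g
    set x := φ g * g⁻¹ with hxdef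
    have hφg : φ g = x * g := by rw [hxdef]; group
    have h2 : φ g⁻¹ * g = x⁻¹ := by
      rw [map_inv, hφg, mul_inv_rev]
      rw [hcomm x⁻¹ (Subgroup.inv_mem _ (hC hx)) g⁻¹]
      group
    have h3 : x⁻¹ ∈ (Subgroup.center G ⊓ commutator G) ⊓ C :=
      ⟨h2 ▸ hφ' g, Subgroup.inv_mem _ hx⟩
    rw [hCint, Subgroup.mem_bot, inv_eq_one] at h3
    rw [hφg, h3, one_mul]
  · intro φ hφ
    -- decompose f g = φ g * g⁻¹ as a(g) * c(g)
    have hdec : ∀ g : G, ∃ p : G × G, p.1 ∈ Subgroup.center G ⊓ commutator G ∧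
        p.2 ∈ C ∧ φ g * g⁻¹ = p.1 * p.2 := by
      intro g
      obtain ⟨a, ha, c, hc', hEq⟩ := hCgen _ (hφ g)
      exact ⟨(a, c), ha, hc', hEq⟩
    choose p hp1 hp2 hp3 using hdec
    set a : G → G := fun g => (p g).1 with hadef
    set c : G → G := fun g => (p g).2 with hcdef
    -- f is a homomorphism into the center
    have hf_mul : ∀ g h : G, φ (g * h) * (g * h)⁻¹ = (φ g * g⁻¹) * (φ h * h⁻¹) := by
      intro g h
      have hz : φ h * h⁻¹ ∈ Subgroup.center G := hφ h
      have hstep : φ (g * h) * (g * h)⁻¹ = φ g * ((φ h * h⁻¹) * g⁻¹) := by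
        rw [map_mul]; group
      rw [hstep, ← hcomm _ hz g⁻¹]
      group
    -- c is multiplicative
    have hc_mul : ∀ g h : G, c (g * h) = c g * c h := by
      intro g h
      have key : a (g * h) * c (g * h) = (a g * a h) * (c g * c h) := by
        rw [← hp3 (g * h), hf_mul g h, hp3 g, hp3 h]
        rw [mul_assoc (a g), ← mul_assoc (c g) (a h) (c h),
          hcomm _ ((hp1 h).1) (c g)]
        group
        rfl
      exact (uniq _ _ _ _ (hp1 (g * h)) (Subgroup.mul_mem _ (hp1 g) (hp1 h))
        (hp2 (g * h)) (Subgroup.mul_mem _ (hp2 g) (hp2 h)) key).2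
    have hc_one : c 1 = 1 := by
      have key : a 1 * c 1 = 1 * 1 := by
        rw [← hp3 1]; simp
      exact (uniq _ _ _ _ (hp1 1) (Subgroup.one_mem _) (hp2 1) (Subgroup.one_mem _) key).2
    set cmap : G →* G := { toFun := c, map_one' := hc_one, map_mul' := hc_mul } with hcmap
    have hcc : ∀ g, cmap g ∈ Subgroup.center G := fun g => hC (hp2 g)
    have hbij := bij_of_central_shift hpna cmap hcc
    set k : MulAut G := MulEquiv.ofBijective (shiftHom cmap hcc) hbij with hk
    have hkapp : ∀ g, k g = c g * g := fun g => rfl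
    have hkmem : ∀ g : G, k g * g⁻¹ ∈ C := by
      intro g
      have : k g * g⁻¹ = c g := by rw [hkapp]; group
      rw [this]; exact hp2 g
    refine ⟨φ * k⁻¹, ?_, k, hkmem, by group⟩
    intro g
    set h : G := k⁻¹ g with hh
    have hkh : c h * h = g := by
      have := k.apply_symm_apply g
      rw [← hkapp h]; exact this
    have hψ : (φ * k⁻¹) g = a h * g := by
      show φ (k⁻¹ g) = a h * g
      have h1 : φ h * h⁻¹ = a h * c h := hp3 h
      have h2 : φ h = a h * c h * h := by rw [← h1]; group
      rw [← hh, h2, mul_assoc, hkh]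
    have hmem := hp1 h
    have hcen : a h ∈ Subgroup.center G := hmem.1
    have : (φ * k⁻¹) g⁻¹ * g = (a h)⁻¹ := by
      rw [map_inv, hψ, mul_inv_rev]
      rw [hcomm (a h)⁻¹ (Subgroup.inv_mem _ hcen) g⁻¹]
      group
    rw [this]
    exact Subgroup.inv_mem _ hmem
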